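/- Let K_T be the complete graph on vertex set [T] = {1,...,T} with edge weights e(i,j) = λ γ^{|j-i|} for i ≠ j, where γ ∈ [0,1) and λ ≥ 0. Then the partition of [T] into K parts given by P_k = {t ∈ [T] : t ≡ k (mod K)} maximizes, over all partitions of [T] into K parts, the total weight of edges whose endpoints lie in different parts (i.e., it is an exact Max K-Cut of K_T). -/

import Mathlib

open Finset

lemma pairs_card (S : Finset ℕ) :
    ((S ×ˢ S).filter fun p => p.1 < p.2).card * 2 = S.card * (S.card - 1) := by
  have h1 : ((S ×ˢ S).filter fun p => p.1 < p.2).card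
      = ((S ×ˢ S).filter fun p => p.2 < p.1).card := by
    apply Finset.card_nbij (fun p => (p.2, p.1))
    · intro p hp; simp only [mem_coe, mem_filter, mem_product] at *; tauto
    · intro p hp q hq h
      simp only [Prod.ext_iff] at h
      exact Prod.ext h.2 h.1
    · intro p hp; refine ⟨(p.2, p.1), ?_, rfl⟩
      simp only [Set.mem_setOf_eq, coe_filter, mem_coe, mem_product] at *; tauto
  have h2 : ((S ×ˢ S).filter fun p => p.1 < p.2) ∪ ((S ×ˢ S).filter fun p => p.2 < p.1)
      = S.offDiag := by
    ext p; simp only [mem_union, mem_filter, mem_product, Finset.mem_offDiag]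
    constructor
    · rintro (⟨⟨h1,h2⟩,h3⟩|⟨⟨h1,h2⟩,h3⟩) <;> exact ⟨h1, h2, by omega⟩
    · rintro ⟨h1, h2, h3⟩; rcases lt_or_gt_of_ne h3 with h|h
      · exact Or.inl ⟨⟨h1,h2⟩,h⟩
      · exact Or.inr ⟨⟨h1,h2⟩,h⟩
  have h3 : Disjoint ((S ×ˢ S).filter fun p => p.1 < p.2)
      ((S ×ˢ S).filter fun p => p.2 < p.1) := by
    rw [Finset.disjoint_left]; intro p hp hq
    simp only [mem_filter] at hp hq; omega
  have h4 := Finset.card_union_of_disjoint h3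
  rw [h2, Finset.offDiag_card] at h4
  have h5 : S.card * (S.card - 1) = S.card * S.card - S.card := Nat.mul_pred _ _
  omega

lemma gauss : ∀ n s : ℕ, n ≤ s + 1 → 2 * ∑ r ∈ Icc 1 s, (n - r) = n * (n - 1) := by
  intro n
  induction n with
  | zero => intro s _; simp
  | succ n ih =>
    intro s hs
    have hns : n ≤ s := by omega
    have h1 : ∑ r ∈ Icc 1 s, (n + 1 - r) = (∑ r ∈ Icc 1 s, (n - r)) + n := by
      have h2 : ∀ r ∈ Icc 1 s, n + 1 - r = (n - r) + (if r ≤ n then 1 else 0) := by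
        intro r hr; simp only [mem_Icc] at hr; split_ifs <;> omega
      rw [Finset.sum_congr rfl h2, Finset.sum_add_distrib]
      congr 1
      rw [Finset.sum_boole]
      have h3 : (Icc 1 s).filter (fun r => r ≤ n) = Icc 1 n := by
        ext r; simp only [mem_filter, mem_Icc]; omega
      simp [h3]
    rw [h1]
    have h4 := ih s (by omega)
    cases n with
    | zero => simp
    | succ m => simp only [Nat.add_sub_cancel] at h4 ⊢; nlinarith [h4]

/-- number of monochromatic increasing pairs in the window `Icc a b` -/
def mcount (c : ℕ → ℕ) (a b : ℕ) : ℕ :=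
  (((Icc a b) ×ˢ (Icc a b)).filter fun p => p.1 < p.2 ∧ c p.1 = c p.2).card

lemma mcount_lower (K T : ℕ) (c : ℕ → ℕ) (hc : ∀ t ∈ Icc 1 T, c t ∈ Icc 1 K)
    (a b : ℕ) (ha : 1 ≤ a) (hb : b ≤ T) :
    ∑ r ∈ Icc 1 (Icc a b).card, ((Icc a b).card - r * K) ≤ mcount c a b := by
  set s := (Icc a b).card with hs
  have hsub : ∀ t ∈ Icc a b, c t ∈ Icc 1 K := by
    intro t ht; simp only [mem_Icc] at ht; exact hc t (by simp only [mem_Icc]; omega)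
  -- fiberwise decomposition of the pair count
  have hmem : ∀ p ∈ ((Icc a b ×ˢ Icc a b).filter fun p => p.1 < p.2 ∧ c p.1 = c p.2),
      c p.1 ∈ Icc 1 K := by
    intro p hp; simp only [mem_filter, mem_product] at hp; exact hsub p.1 hp.1.1
  have hfib := Finset.card_eq_sum_card_fiberwise hmem
  have hclass : ∀ k, (((Icc a b ×ˢ Icc a b).filter fun p => p.1 < p.2 ∧ c p.1 = c p.2).filter
        fun p => c p.1 = k)
      = (((Icc a b).filter fun t => c t = k) ×ˢ ((Icc a b).filter fun t => c t = k)).filter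
        fun p => p.1 < p.2 := by
    intro k; ext p
    simp only [mem_filter, mem_product]
    constructor
    · rintro ⟨⟨⟨h1, h2⟩, h3, h4⟩, h5⟩; exact ⟨⟨⟨h1, h5⟩, ⟨h2, by rw [← h4]; exact h5⟩⟩, h3⟩
    · rintro ⟨⟨⟨h1, h5⟩, h2, h6⟩, h3⟩; exact ⟨⟨⟨h1, h2⟩, h3, by rw [h5, h6]⟩, h5⟩
  -- class sizes
  set n : ℕ → ℕ := fun k => ((Icc a b).filter fun t => c t = k).card with hn
  have hsum : s = ∑ k ∈ Icc 1 K, n k := Finset.card_eq_sum_card_fiberwise hsub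
  have hnk : ∀ k, n k ≤ s := fun k => Finset.card_filter_le _ _
  -- doubled count per class
  have h2m : 2 * mcount c a b = ∑ k ∈ Icc 1 K, ∑ r ∈ Icc 1 s, 2 * (n k - r) := by
    rw [mcount, hfib]
    rw [Finset.mul_sum]
    apply Finset.sum_congr rfl
    intro k _
    rw [hclass k, ← Finset.mul_sum, mul_comm (2 : ℕ), pairs_card, ← gauss (n k) s (by
      have := hnk k; omega)]
  have hgoal2 : 2 * ∑ r ∈ Icc 1 s, (s - r * K) ≤ 2 * mcount c a b := by
    rw [h2m, Finset.sum_comm, Finset.mul_sum]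
    apply Finset.sum_le_sum
    intro r _
    have hks : ∑ k ∈ Icc 1 K, n k ≤ (∑ k ∈ Icc 1 K, (n k - r)) + K * r := by
      calc ∑ k ∈ Icc 1 K, n k ≤ ∑ k ∈ Icc 1 K, ((n k - r) + r) :=
            Finset.sum_le_sum (fun k _ => by omega)
        _ = (∑ k ∈ Icc 1 K, (n k - r)) + K * r := by
            rw [Finset.sum_add_distrib, Finset.sum_const, Nat.card_Icc]; simp [mul_comm]
    have hcomm : K * r = r * K := Nat.mul_comm K r
    have : s - r * K ≤ ∑ k ∈ Icc 1 K, (n k - r) := by rw [hsum]; omega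
    calc 2 * (s - r * K) ≤ 2 * ∑ k ∈ Icc 1 K, (n k - r) := by omega
      _ = ∑ k ∈ Icc 1 K, 2 * (n k - r) := by rw [Finset.mul_sum]
  omega

lemma mcount_mod_upper (K : ℕ) (hK : 0 < K) (a b : ℕ) (ha : 1 ≤ a) :
    mcount (fun t => (t - 1) % K + 1) a b
      ≤ ∑ r ∈ Icc 1 (Icc a b).card, ((Icc a b).card - r * K) := by
  set s := (Icc a b).card with hs
  have htarget : ∑ r ∈ Icc 1 s, (s - r * K)
      = ((Icc 1 s).sigma fun r => Icc 1 (s - r * K)).card := by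
    rw [Finset.card_sigma]
    apply Finset.sum_congr rfl
    intro r _; rw [Nat.card_Icc]; omega
  rw [htarget, mcount]
  apply Finset.card_le_card_of_injOn (fun p => ⟨(p.2 - p.1) / K, p.1 + 1 - a⟩)
  · intro p hp
    simp only [mem_coe, mem_filter, mem_product, mem_Icc] at hp
    obtain ⟨⟨⟨ha1, hb1⟩, ha2, hb2⟩, hlt, hmono⟩ := hp
    have hdvd : K ∣ p.2 - p.1 := by
      have h1 : p.1 - 1 ≡ p.2 - 1 [MOD K] := by
        have : (p.1 - 1) % K + 1 = (p.2 - 1) % K + 1 := hmono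
        unfold Nat.ModEq; omega
      have h2 := (Nat.modEq_iff_dvd' (by omega : p.1 - 1 ≤ p.2 - 1)).mp h1
      have h3 : p.2 - 1 - (p.1 - 1) = p.2 - p.1 := by omega
      rwa [h3] at h2
    obtain ⟨m, hm⟩ := hdvd
    have hm1 : 1 ≤ m := by
      rcases Nat.eq_zero_or_pos m with h | h
      · subst h; simp at hm; omega
      · exact h
    have hdiv : (p.2 - p.1) / K = m := by rw [hm]; exact Nat.mul_div_cancel_left m hK
    have hKm : m ≤ K * m := Nat.le_mul_of_pos_left m hK
    have hscard : s = b + 1 - a := by rw [hs, Nat.card_Icc]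
    simp only [Finset.mem_coe, Finset.mem_sigma, mem_Icc, hdiv]
    have hcomm : K * m = m * K := Nat.mul_comm K m
    omega
  · intro p hp q hq heq
    simp only [mem_coe, mem_filter, mem_product, mem_Icc] at hp hq
    obtain ⟨⟨⟨hpa1, hpb1⟩, hpa2, hpb2⟩, hplt, hpmono⟩ := hp
    obtain ⟨⟨⟨hqa1, hqb1⟩, hqa2, hqb2⟩, hqlt, hqmono⟩ := hq
    simp only [Sigma.mk.inj_iff, heq_eq_eq] at heq
    obtain ⟨h1, h2⟩ := heq
    have hp1 : p.1 = q.1 := by omega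
    have hdvdp : K ∣ p.2 - p.1 := by
      have hmod : (p.1 - 1) % K = (p.2 - 1) % K := by
        simpa using hpmono
      have h2 := (Nat.modEq_iff_dvd' (by omega : p.1 - 1 ≤ p.2 - 1)).mp hmod
      have h3 : p.2 - 1 - (p.1 - 1) = p.2 - p.1 := by omega
      rwa [h3] at h2
    have hdvdq : K ∣ q.2 - q.1 := by
      have hmod : (q.1 - 1) % K = (q.2 - 1) % K := by
        simpa using hqmono
      have h2 := (Nat.modEq_iff_dvd' (by omega : q.1 - 1 ≤ q.2 - 1)).mp hmod
      have h3 : q.2 - 1 - (q.1 - 1) = q.2 - q.1 := by omega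
      rwa [h3] at h2
    have h4 : p.2 - p.1 = q.2 - q.1 := by
      obtain ⟨mp, hmp⟩ := hdvdp
      obtain ⟨mq, hmq⟩ := hdvdq
      rw [hmp, hmq] at h1 ⊢
      rw [Nat.mul_div_cancel_left mp hK, Nat.mul_div_cancel_left mq hK] at h1
      rw [h1]
    have : p.2 = q.2 := by omega
    exact Prod.ext hp1 this

lemma mcount_as_sum (T : ℕ) (c : ℕ → ℕ) (a b : ℕ) (ha : 1 ≤ a) (hb : b ≤ T) :
    mcount c a b = ∑ j ∈ Icc 1 T, ∑ i ∈ Icc 1 (j-1),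
      if c i = c j ∧ a ≤ i ∧ j ≤ b then 1 else 0 := by
  rw [mcount, Finset.card_filter, Finset.sum_product, Finset.sum_comm]
  have hab : Icc a b = (Icc 1 T).filter (fun x => a ≤ x ∧ x ≤ b) := by
    ext x; simp only [mem_Icc, mem_filter]; omega
  rw [hab]
  simp only [Finset.sum_filter]
  apply Finset.sum_congr rfl
  intro j hj
  simp only [mem_Icc] at hj
  have hpull : ∀ (P : Prop) [Decidable P] (s : Finset ℕ) (f : ℕ → ℕ),
      (if P then ∑ i ∈ s, f i else 0) = ∑ i ∈ s, if P then f i else 0 := by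
    intros P _ s f; split_ifs <;> simp
  rw [hpull]
  have hj1 : Icc 1 (j-1) = (Icc 1 T).filter (fun i => i < j) := by
    ext i; simp only [mem_Icc, mem_filter]; omega
  rw [hj1, Finset.sum_filter]
  apply Finset.sum_congr rfl
  intro i hi
  simp only [mem_Icc] at hi
  by_cases hm : c i = c j
  · simp only [hm, eq_self_iff_true, true_and, and_true]; split_ifs <;> omega
  · simp only [hm, false_and, if_false, and_false]
    split_ifs <;> rfl

/-- tent-weighted monochromatic pair count -/
def Fcnt (T e : ℕ) (c : ℕ → ℕ) : ℕ :=
  ∑ j ∈ Icc 1 T, ∑ i ∈ Icc 1 (j-1), if c i = c j then (i + e + 1 - j) else 0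

lemma Fcnt_eq (T e : ℕ) (c : ℕ → ℕ) :
    Fcnt T e c = ∑ u ∈ Icc 1 (T+e), mcount c (max (u - e) 1) (min u T) := by
  have h1 : ∀ u, mcount c (max (u-e) 1) (min u T)
      = ∑ j ∈ Icc 1 T, ∑ i ∈ Icc 1 (j-1),
          if c i = c j ∧ j ≤ u ∧ u ≤ i + e then 1 else 0 := by
    intro u
    rw [mcount_as_sum T c _ _ (le_max_right _ _) (min_le_right _ _)]
    apply Finset.sum_congr rfl; intro j hj
    apply Finset.sum_congr rfl; intro i hi
    simp only [mem_Icc] at hj hi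
    by_cases hm : c i = c j
    · simp only [hm, eq_self_iff_true, true_and]
      refine if_congr ?_ rfl rfl
      constructor <;> intro h <;> [skip; skip] <;>
        · constructor <;> omega
    · simp [hm]
  simp only [h1]
  rw [Finset.sum_comm]
  apply Finset.sum_congr rfl; intro j hj
  rw [Finset.sum_comm]
  apply Finset.sum_congr rfl; intro i hi
  simp only [mem_Icc] at hj hi
  by_cases hm : c i = c j
  · simp only [hm, eq_self_iff_true, true_and]
    have h2 : ∑ u ∈ Icc 1 (T+e), (if j ≤ u ∧ u ≤ i + e then (1:ℕ) else 0)
        = ((Icc 1 (T+e)).filter fun u => j ≤ u ∧ u ≤ i + e).card := by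
      rw [Finset.card_filter]
    rw [h2]
    have h3 : (Icc 1 (T+e)).filter (fun u => j ≤ u ∧ u ≤ i + e) = Icc j (i+e) := by
      ext u; simp only [mem_filter, mem_Icc]; omega
    rw [h3, Nat.card_Icc]; simp
  · simp [hm]

lemma Fcnt_mono (T K e : ℕ) (hK : 0 < K) (c : ℕ → ℕ)
    (hc : ∀ t ∈ Icc 1 T, c t ∈ Icc 1 K) :
    Fcnt T e (fun t => (t-1) % K + 1) ≤ Fcnt T e c := by
  rw [Fcnt_eq, Fcnt_eq]
  apply Finset.sum_le_sum
  intro u _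
  exact le_trans (mcount_mod_upper K hK _ _ (le_max_right _ _))
    (mcount_lower K T c hc _ _ (le_max_right _ _) (min_le_right _ _))

/-- total monochromatic pair count -/
def Gcnt (T : ℕ) (c : ℕ → ℕ) : ℕ :=
  ∑ j ∈ Icc 1 T, ∑ i ∈ Icc 1 (j-1), if c i = c j then 1 else 0

lemma Gcnt_eq (T : ℕ) (c : ℕ → ℕ) : Gcnt T c = mcount c 1 T := by
  rw [mcount_as_sum T c 1 T le_rfl le_rfl, Gcnt]
  apply Finset.sum_congr rfl; intro j hj
  apply Finset.sum_congr rfl; intro i hi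
  simp only [mem_Icc] at hj hi
  refine if_congr ?_ rfl rfl
  constructor
  · intro h; exact ⟨h, by omega, by omega⟩
  · intro h; exact h.1

lemma Gcnt_mono (T K : ℕ) (hK : 0 < K) (c : ℕ → ℕ)
    (hc : ∀ t ∈ Icc 1 T, c t ∈ Icc 1 K) :
    Gcnt T (fun t => (t-1) % K + 1) ≤ Gcnt T c := by
  rw [Gcnt_eq, Gcnt_eq]
  exact le_trans (mcount_mod_upper K hK 1 T le_rfl)
    (mcount_lower K T c hc 1 T le_rfl le_rfl)

lemma geom_decomp (γ : ℝ) (d : ℕ) (hd : 1 ≤ d) (E : ℕ) (hE : d - 1 ≤ E) :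
    γ^d = (1-γ)^2 * (∑ e ∈ Icc 1 E, γ^e * ((e + 1 - d : ℕ) : ℝ))
        + (1-γ) * γ^(E+1) * ((E + 2 - d : ℕ) : ℝ) + γ^(E+2) := by
  induction E, hE using Nat.le_induction with
  | base =>
    have hsum : ∑ e ∈ Icc 1 (d-1), γ^e * ((e + 1 - d : ℕ) : ℝ) = 0 := by
      apply Finset.sum_eq_zero; intro e he; simp only [mem_Icc] at he
      have h : e + 1 - d = 0 := by omega
      rw [h]; simp
    rw [hsum, show d - 1 + 1 = d from by omega, show (d - 1 + 2 - d : ℕ) = 1 from by omega,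
      show d - 1 + 2 = d + 1 from by omega]
    push_cast; ring
  | succ E hE ih =>
    rw [Finset.sum_Icc_succ_top (by omega : 1 ≤ E + 1), ih,
      show (E + 1 + 1 - d : ℕ) = E + 2 - d from by omega,
      show (E + 1 + 2 - d : ℕ) = (E + 2 - d) + 1 from by omega,
      show E + 1 + 1 = E + 2 from by omega, show E + 1 + 2 = E + 3 from by omega]
    push_cast; ring

lemma triple_swap {M : Type*} [AddCommMonoid M] (A : Finset ℕ) (g : ℕ → Finset ℕ)
    (B : Finset ℕ) (f : ℕ → ℕ → ℕ → M) :
    ∑ j ∈ A, ∑ i ∈ g j, ∑ e ∈ B, f j i e = ∑ e ∈ B, ∑ j ∈ A, ∑ i ∈ g j, f j i e := by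
  calc ∑ j ∈ A, ∑ i ∈ g j, ∑ e ∈ B, f j i e
      = ∑ j ∈ A, ∑ e ∈ B, ∑ i ∈ g j, f j i e :=
        Finset.sum_congr rfl (fun j _ => Finset.sum_comm)
    _ = _ := Finset.sum_comm



/-- Total weight of edges of the complete graph on `{1, …, T}` with weights
`e(i,j) = λ γ^{|j-i|}` that cross the partition induced by the labeling `c`. -/
noncomputable def cutValue (T : ℕ) (lam γ : ℝ) (c : ℕ → ℕ) : ℝ :=
  ∑ j ∈ Finset.Icc 1 T, ∑ i ∈ Finset.Icc 1 (j-1),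
    if c i ≠ c j then lam * γ^(j-i) else 0

/-- The partition `P_k = {t : t ≡ k (mod K)}` is an exact Max K-Cut of the
complete graph `K_T` with edge weights `λ γ^{|j-i|}`. -/
theorem stmt7 (T K : ℕ) (hK : 0 < K) (lam γ : ℝ)
    (hγ : γ ∈ Set.Ico (0:ℝ) 1) (hlam : 0 ≤ lam)
    (c : ℕ → ℕ) (hc : ∀ t ∈ Finset.Icc 1 T, c t ∈ Finset.Icc 1 K) :
    cutValue T lam γ c ≤ cutValue T lam γ (fun t => (t-1) % K + 1) := by
  obtain ⟨hγ0, hγ1⟩ := hγ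
  have hsplit : ∀ c' : ℕ → ℕ, cutValue T lam γ c' =
      (∑ j ∈ Icc 1 T, ∑ i ∈ Icc 1 (j-1), lam * γ^(j-i))
      - ∑ j ∈ Icc 1 T, ∑ i ∈ Icc 1 (j-1), (if c' i = c' j then lam * γ^(j-i) else 0) := by
    intro c'
    rw [cutValue, ← Finset.sum_sub_distrib]
    apply Finset.sum_congr rfl; intro j _
    rw [← Finset.sum_sub_distrib]
    apply Finset.sum_congr rfl; intro i _
    by_cases h : c' i = c' j <;> simp [h]
  rw [hsplit, hsplit]
  have hSame : ∀ c' : ℕ → ℕ,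
      (∑ j ∈ Icc 1 T, ∑ i ∈ Icc 1 (j-1), if c' i = c' j then lam * γ^(j-i) else 0)
      = lam * (1-γ)^2 * (∑ e ∈ Icc 1 T, γ^e * (Fcnt T e c' : ℝ))
        + lam * (1-γ) * γ^(T+1) * (Fcnt T (T+1) c' : ℝ)
        + lam * γ^(T+2) * (Gcnt T c' : ℝ) := by
    intro c'
    have hFcast : ∀ e, ((Fcnt T e c' : ℕ) : ℝ)
        = ∑ j ∈ Icc 1 T, ∑ i ∈ Icc 1 (j-1),
            (if c' i = c' j then ((i+e+1-j : ℕ) : ℝ) else 0) := by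
      intro e
      rw [Fcnt]
      push_cast [apply_ite (fun n : ℕ => (n : ℝ))]
      norm_num
    have hGcast : ((Gcnt T c' : ℕ) : ℝ)
        = ∑ j ∈ Icc 1 T, ∑ i ∈ Icc 1 (j-1), (if c' i = c' j then (1:ℝ) else 0) := by
      rw [Gcnt]; push_cast [apply_ite (fun n : ℕ => (n : ℝ))]; norm_num
    rw [hGcast]
    simp only [hFcast]
    calc ∑ j ∈ Icc 1 T, ∑ i ∈ Icc 1 (j-1), (if c' i = c' j then lam * γ^(j-i) else 0)
        = ∑ j ∈ Icc 1 T, ∑ i ∈ Icc 1 (j-1),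
            ((lam * (1-γ)^2) * ∑ e ∈ Icc 1 T,
                γ^e * (if c' i = c' j then ((i+e+1-j : ℕ) : ℝ) else 0)
             + (lam * (1-γ) * γ^(T+1)) * (if c' i = c' j then ((i+(T+1)+1-j : ℕ) : ℝ) else 0)
             + (lam * γ^(T+2)) * (if c' i = c' j then (1:ℝ) else 0)) := by
          apply Finset.sum_congr rfl; intro j hj
          apply Finset.sum_congr rfl; intro i hi
          simp only [mem_Icc] at hj hi
          by_cases hm : c' i = c' j
          · simp only [hm, if_pos, if_true, eq_self_iff_true]
            have hd := geom_decomp γ (j-i) (by omega) T (by omega)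
            have he1 : ∀ e ∈ Icc 1 T, γ^e * ((e + 1 - (j-i) : ℕ) : ℝ)
                = γ^e * ((i+e+1-j : ℕ) : ℝ) := by
              intro e _; congr 2; omega
            rw [Finset.sum_congr rfl he1] at hd
            have he2 : ((T + 2 - (j-i) : ℕ) : ℝ) = ((i+(T+1)+1-j : ℕ) : ℝ) := by
              congr 1; omega
            rw [he2] at hd
            rw [hd]; ring
          · simp [hm]
      _ = _ := by
          simp only [Finset.sum_add_distrib]
          congr 1; congr 1
          · simp only [← Finset.mul_sum]
            congr 1
            rw [triple_swap]
            apply Finset.sum_congr rfl; intro e _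
            rw [Finset.mul_sum]
            apply Finset.sum_congr rfl; intro j _
            rw [Finset.mul_sum]
          · simp only [← Finset.mul_sum]
          · simp only [← Finset.mul_sum]
  rw [hSame, hSame]
  have hF := fun e => Fcnt_mono T K e hK c hc
  have hG := Gcnt_mono T K hK c hc
  have h1γ : (0:ℝ) ≤ 1 - γ := by linarith
  have hA : (∑ e ∈ Icc 1 T, γ^e * (Fcnt T e (fun t => (t-1) % K + 1) : ℝ))
      ≤ ∑ e ∈ Icc 1 T, γ^e * (Fcnt T e c : ℝ) := by
    apply Finset.sum_le_sum; intro e _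
    exact mul_le_mul_of_nonneg_left (Nat.cast_le.mpr (hF e)) (pow_nonneg hγ0 e)
  have hB : ((Fcnt T (T+1) (fun t => (t-1) % K + 1) : ℕ) : ℝ) ≤ (Fcnt T (T+1) c : ℝ) :=
    Nat.cast_le.mpr (hF (T+1))
  have hC : ((Gcnt T (fun t => (t-1) % K + 1) : ℕ) : ℝ) ≤ (Gcnt T c : ℝ) :=
    Nat.cast_le.mpr hG
  have c1 : (0:ℝ) ≤ lam * (1-γ)^2 := mul_nonneg hlam (sq_nonneg _)
  have c2 : (0:ℝ) ≤ lam * (1-γ) * γ^(T+1) :=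
    mul_nonneg (mul_nonneg hlam h1γ) (pow_nonneg hγ0 _)
  have c3 : (0:ℝ) ≤ lam * γ^(T+2) := mul_nonneg hlam (pow_nonneg hγ0 _)
  have e1 := mul_le_mul_of_nonneg_left hA c1
  have e2 := mul_le_mul_of_nonneg_left hB c2
  have e3 := mul_le_mul_of_nonneg_left hC c3
  linarith
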